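/- Let H(ℓ, r) be the disjoint union of two unit-weight cliques of sizes ℓ and r. Any hierarchical clustering T of H(ℓ, r) whose top split partitions the cliques as (ℓ₁ + r₁, ℓ₂ + r₂) (with ℓ₁ + ℓ₂ = ℓ, r₁ + r₂ = r) satisfies cost(T) ≥ (ℓ³ − ℓ)/3 + (r³ − r)/3 + ℓ₁·ℓ₂·r + r₁·r₂·ℓ. -/

import Mathlib

open Finset

/-- A rooted binary tree whose leaves are labeled by elements of `Fin n`. -/
inductive HTree (n : ℕ) : Type where
  | leaf : Fin n → HTree n
  | node : HTree n → HTree n → HTree n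

namespace HTree

variable {n : ℕ}

/-- The list of leaf labels, left to right. -/
def leafList : HTree n → List (Fin n)
  | .leaf v => [v]
  | .node l r => l.leafList ++ r.leafList

/-- The set of leaf labels of a tree. -/
def leaves (T : HTree n) : Finset (Fin n) := T.leafList.toFinset

/-- `T` is a hierarchical clustering tree of the whole vertex set `Fin n`:
its leaves are in one-to-one correspondence with `Fin n`. -/
def IsFullTree (T : HTree n) : Prop := T.leafList.Nodup ∧ T.leaves = Finset.univ

/-- `|leaves(T[i ∨ j])|`: the number of leaves of the subtree rooted at the
lowest common ancestor of leaves `i` and `j`. -/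
def lcaSize : HTree n → Fin n → Fin n → ℕ
  | .leaf _, _, _ => 1
  | .node l r, i, j =>
    if i ∈ l.leaves ∧ j ∈ l.leaves then l.lcaSize i j
    else if i ∈ r.leaves ∧ j ∈ r.leaves then r.lcaSize i j
    else (l.leaves ∪ r.leaves).card

/-- `cost_G(T) = Σ_{{i,j}} w_{ij} |leaves(T[i ∨ j])|`, the sum being over
unordered pairs (represented as ordered pairs `p.1 < p.2`). -/
def pairCost (w : Fin n → Fin n → ℝ) (T : HTree n) : ℝ :=
  ∑ p ∈ Finset.univ.filter (fun p : Fin n × Fin n => p.1 < p.2),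
    w p.1 p.2 * (T.lcaSize p.1 p.2 : ℝ)

/-- `w(A, B)`: total weight of edges between `A` and `B`. -/
def cut (w : Fin n → Fin n → ℝ) (A B : Finset (Fin n)) : ℝ :=
  ∑ i ∈ A, ∑ j ∈ B, w i j

/-- The sum-of-splits formulation of the cost:
`Σ over internal splits S → (S₁,S₂) of |S| ⬝ w(S₁,S₂)`. -/
def splitCost (w : Fin n → Fin n → ℝ) : HTree n → ℝ
  | .leaf _ => 0
  | .node l r =>
      ((l.leaves ∪ r.leaves).card : ℝ) * cut w l.leaves r.leaves
        + splitCost w l + splitCost w r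

/-- `Subtree t T`: `t` occurs as a subtree of `T`. -/
inductive Subtree : HTree n → HTree n → Prop
  | refl (t : HTree n) : Subtree t t
  | left {t l r : HTree n} : Subtree t l → Subtree t (.node l r)
  | right {t l r : HTree n} : Subtree t r → Subtree t (.node l r)

theorem lcaSize_comm (t : HTree n) (i j : Fin n) : t.lcaSize i j = t.lcaSize j i := by
  induction t with
  | leaf v => rfl
  | node l r ihl ihr =>
    simp only [lcaSize]
    by_cases h1 : i ∈ l.leaves ∧ j ∈ l.leaves
    · have h1' : j ∈ l.leaves ∧ i ∈ l.leaves := ⟨h1.2, h1.1⟩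
      rw [if_pos h1, if_pos h1', ihl]
    · have h1' : ¬(j ∈ l.leaves ∧ i ∈ l.leaves) := fun h => h1 ⟨h.2, h.1⟩
      rw [if_neg h1, if_neg h1']
      by_cases h2 : i ∈ r.leaves ∧ j ∈ r.leaves
      · have h2' : j ∈ r.leaves ∧ i ∈ r.leaves := ⟨h2.2, h2.1⟩
        rw [if_pos h2, if_pos h2', ihr]
      · have h2' : ¬(j ∈ r.leaves ∧ i ∈ r.leaves) := fun h => h2 ⟨h.2, h.1⟩
        rw [if_neg h2, if_neg h2']

theorem leaves_node (l r : HTree n) : (node l r).leaves = l.leaves ∪ r.leaves := by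
  simp [leaves, leafList]

theorem node_offDiag_sum (l r : HTree n) (hd : Disjoint l.leaves r.leaves)
    (A1 A2 : Finset (Fin n)) (h1 : A1 ⊆ l.leaves) (h2 : A2 ⊆ r.leaves) :
    ∑ p ∈ (A1 ∪ A2).offDiag, (node l r).lcaSize p.1 p.2 =
      ∑ p ∈ A1.offDiag, l.lcaSize p.1 p.2 + ∑ p ∈ A2.offDiag, r.lcaSize p.1 p.2
        + 2 * (A1.card * A2.card) * (l.leaves ∪ r.leaves).card := by
  have hdA : Disjoint A1 A2 := hd.mono h1 h2
  have hnotr : ∀ x ∈ A1, x ∉ r.leaves := fun x hx => disjoint_left.1 hd (h1 hx)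
  have hnotl : ∀ x ∈ A2, x ∉ l.leaves := fun x hx => disjoint_left.1 hd.symm (h2 hx)
  rw [offDiag_union hdA]
  have d1 : Disjoint A1.offDiag A2.offDiag := by
    rw [disjoint_left]
    rintro ⟨x, y⟩ hp hq
    exact hnotr x (mem_offDiag.1 hp).1 (h2 (mem_offDiag.1 hq).1)
  have d2 : Disjoint (A1.offDiag ∪ A2.offDiag) (A1 ×ˢ A2) := by
    rw [disjoint_left]
    rintro ⟨x, y⟩ hp hq
    rw [mem_product] at hq
    rcases mem_union.1 hp with h | h
    · exact hnotr y (mem_offDiag.1 h).2.1 (h2 hq.2)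
    · exact hnotl x (mem_offDiag.1 h).1 (h1 hq.1)
  have d3 : Disjoint (A1.offDiag ∪ A2.offDiag ∪ A1 ×ˢ A2) (A2 ×ˢ A1) := by
    rw [disjoint_left]
    rintro ⟨x, y⟩ hp hq
    rw [mem_product] at hq
    rcases mem_union.1 hp with h | h
    · rcases mem_union.1 h with h' | h'
      · exact hnotl x hq.1 (h1 (mem_offDiag.1 h').1)
      · exact hnotr y hq.2 (h2 (mem_offDiag.1 h').2.1)
    · rw [mem_product] at h
      exact hnotl x hq.1 (h1 h.1)
  rw [sum_union d3, sum_union d2, sum_union d1]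
  have e1 : ∑ p ∈ A1.offDiag, (node l r).lcaSize p.1 p.2 = ∑ p ∈ A1.offDiag, l.lcaSize p.1 p.2 := by
    refine sum_congr rfl fun p hp => ?_
    have := mem_offDiag.1 hp
    simp only [lcaSize]
    rw [if_pos ⟨h1 this.1, h1 this.2.1⟩]
  have e2 : ∑ p ∈ A2.offDiag, (node l r).lcaSize p.1 p.2 = ∑ p ∈ A2.offDiag, r.lcaSize p.1 p.2 := by
    refine sum_congr rfl fun p hp => ?_
    have := mem_offDiag.1 hp
    simp only [lcaSize]
    rw [if_neg (fun h => hnotl p.1 this.1 h.1), if_pos ⟨h2 this.1, h2 this.2.1⟩]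
  have e3 : ∑ p ∈ A1 ×ˢ A2, (node l r).lcaSize p.1 p.2 =
      A1.card * A2.card * (l.leaves ∪ r.leaves).card := by
    have : ∀ p ∈ A1 ×ˢ A2, (node l r).lcaSize p.1 p.2 = (l.leaves ∪ r.leaves).card := by
      intro p hp
      rw [mem_product] at hp
      simp only [lcaSize]
      rw [if_neg (fun h => hnotl p.2 hp.2 h.2), if_neg (fun h => hnotr p.1 hp.1 h.1)]
    rw [sum_congr rfl this, sum_const, smul_eq_mul, card_product]
  have e4 : ∑ p ∈ A2 ×ˢ A1, (node l r).lcaSize p.1 p.2 =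
      A1.card * A2.card * (l.leaves ∪ r.leaves).card := by
    have : ∀ p ∈ A2 ×ˢ A1, (node l r).lcaSize p.1 p.2 = (l.leaves ∪ r.leaves).card := by
      intro p hp
      rw [mem_product] at hp
      simp only [lcaSize]
      rw [if_neg (fun h => hnotl p.1 hp.1 h.1), if_neg (fun h => hnotr p.2 hp.2 h.2)]
    rw [sum_congr rfl this, sum_const, smul_eq_mul, card_product, Nat.mul_comm A2.card]
  rw [e1, e2, e3, e4]
  ring

theorem key (t : HTree n) (ht : t.leafList.Nodup) (S : Finset (Fin n)) :
    2 * (S ∩ t.leaves).card ^ 3 ≤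
      3 * ∑ p ∈ (S ∩ t.leaves).offDiag, t.lcaSize p.1 p.2 + 2 * (S ∩ t.leaves).card := by
  induction t with
  | leaf v =>
    have hsub : S ∩ (leaf v : HTree n).leaves ⊆ {v} := by
      intro x hx
      simpa [leaves, leafList] using (mem_inter.1 hx).2
    have hk : (S ∩ (leaf v : HTree n).leaves).card ≤ 1 := by
      simpa using card_le_card hsub
    calc 2 * (S ∩ (leaf v : HTree n).leaves).card ^ 3
        ≤ 2 * (S ∩ (leaf v : HTree n).leaves).card := by
          set k := (S ∩ (leaf v : HTree n).leaves).card
          interval_cases k <;> norm_num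
      _ ≤ _ := Nat.le_add_left _ _
  | node l r ihl ihr =>
    have hnd : l.leafList.Nodup ∧ r.leafList.Nodup ∧ l.leafList.Disjoint r.leafList := by
      refine (fun h => ⟨h.1, h.2.1, fun a ha hb => h.2.2 a ha a hb rfl⟩) (List.nodup_append.1 ?_)
      exact ht
    have hd : Disjoint l.leaves r.leaves :=
      List.disjoint_toFinset_iff_disjoint.2 hnd.2.2
    have hsplit : S ∩ (node l r).leaves = (S ∩ l.leaves) ∪ (S ∩ r.leaves) := by
      rw [leaves_node, inter_union_distrib_left]
    have hdA : Disjoint (S ∩ l.leaves) (S ∩ r.leaves) :=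
      hd.mono inter_subset_right inter_subset_right
    rw [hsplit, node_offDiag_sum l r hd _ _ inter_subset_right inter_subset_right,
      card_union_of_disjoint hdA]
    have hN : (S ∩ l.leaves).card + (S ∩ r.leaves).card ≤ (l.leaves ∪ r.leaves).card := by
      rw [← card_union_of_disjoint hdA]
      exact card_le_card (union_subset_union inter_subset_right inter_subset_right)
    have h1 := ihl hnd.1
    have h2 := ihr hnd.2.1
    nlinarith [Nat.mul_le_mul_left (6 * ((S ∩ l.leaves).card * (S ∩ r.leaves).card)) hN,
      Nat.zero_le ((S ∩ l.leaves).card * (S ∩ r.leaves).card)]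

theorem offDiag_eq_two_mul (A : Finset (Fin n)) (f : Fin n → Fin n → ℕ)
    (hf : ∀ i j, f i j = f j i) :
    ∑ p ∈ A.offDiag, f p.1 p.2 =
      2 * ∑ p ∈ A.offDiag.filter (fun p => p.1 < p.2), f p.1 p.2 := by
  rw [← sum_filter_add_sum_filter_not A.offDiag (fun p => p.1 < p.2), two_mul]
  congr 1
  refine sum_nbij' Prod.swap Prod.swap ?_ ?_ ?_ ?_ ?_
  · intro p hp
    simp only [mem_filter, mem_offDiag, not_lt, Prod.fst_swap, Prod.snd_swap] at hp ⊢
    exact ⟨⟨hp.1.2.1, hp.1.1, fun h => hp.1.2.2 h.symm⟩,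
      lt_of_le_of_ne hp.2 (fun h => hp.1.2.2 h.symm)⟩
  · intro p hp
    simp only [mem_filter, mem_offDiag, not_lt, Prod.fst_swap, Prod.snd_swap] at hp ⊢
    exact ⟨⟨hp.1.2.1, hp.1.1, fun h => hp.1.2.2 h.symm⟩, le_of_lt hp.2⟩
  · intro a _; exact Prod.swap_swap a
  · intro a _; exact Prod.swap_swap a
  · intro p _
    simp only [Prod.fst_swap, Prod.snd_swap]
    exact hf p.1 p.2


end HTree

theorem two_cliques_arith (a1 a2 FL FR PA l r' : ℕ)
    (kL : 2 * a1 ^ 3 ≤ 3 * FL + 2 * a1) (kR : 2 * a2 ^ 3 ≤ 3 * FR + 2 * a2)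
    {s : ℕ} (hO : 2 * PA = FL + FR + 2 * (a1 * a2) * s) (ha : a1 + a2 = l)
    (hs : l + r' = s) :
    2 * l ^ 3 + 6 * (a1 * a2) * r' ≤ 6 * PA + 2 * l := by
  subst ha hs
  nlinarith [kL, kR, hO]

/-- Any hierarchical clustering of `H(ℓ,r)` (two disjoint unit-weight cliques `A`,
`B` of sizes `ℓ`, `r`) whose top split divides `A` as `(ℓ₁, ℓ₂)` and `B` as
`(r₁, r₂)` costs at least `C(ℓ,r) + ℓ₁ℓ₂r + r₁r₂ℓ`. -/
theorem two_cliques_nonlaminar_split (ℓ r : ℕ) (L R : HTree (ℓ + r))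
    (hT : (HTree.node L R).IsFullTree) :
    ((ℓ : ℝ) ^ 3 - ℓ) / 3 + ((r : ℝ) ^ 3 - r) / 3
      + ((L.leaves.filter (fun i => i.val < ℓ)).card : ℝ)
          * ((R.leaves.filter (fun i => i.val < ℓ)).card : ℝ) * r
      + ((L.leaves.filter (fun i => ℓ ≤ i.val)).card : ℝ)
          * ((R.leaves.filter (fun i => ℓ ≤ i.val)).card : ℝ) * ℓ
    ≤ (HTree.node L R).pairCost (fun i j =>
        if i ≠ j ∧ ((i.val < ℓ ∧ j.val < ℓ) ∨ (ℓ ≤ i.val ∧ ℓ ≤ j.val)) then 1 else 0) := by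
  obtain ⟨hnd, hfull⟩ := hT
  have hnd' : L.leafList.Nodup ∧ R.leafList.Nodup ∧ L.leafList.Disjoint R.leafList := by
    refine (fun h => ⟨h.1, h.2.1, fun a ha hb => h.2.2 a ha a hb rfl⟩) (List.nodup_append.1 ?_); exact hnd
  have hd : Disjoint L.leaves R.leaves := List.disjoint_toFinset_iff_disjoint.2 hnd'.2.2
  have huniv : L.leaves ∪ R.leaves = Finset.univ := by
    rw [← HTree.leaves_node]; exact hfull
  set A : Finset (Fin (ℓ + r)) := Finset.univ.filter (fun i => i.val < ℓ) with hAdef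
  set B : Finset (Fin (ℓ + r)) := Finset.univ.filter (fun i => ℓ ≤ i.val) with hBdef
  -- cardinalities
  have cardA : A.card = ℓ := by
    apply Finset.card_eq_of_bijective
      (fun i hi => (⟨i, lt_of_lt_of_le hi (Nat.le_add_right ℓ r)⟩ : Fin (ℓ + r)))
    · intro x hx
      rw [hAdef, mem_filter] at hx
      exact ⟨x.val, hx.2, Fin.ext rfl⟩
    · intro i hi
      rw [hAdef, mem_filter]
      exact ⟨mem_univ _, hi⟩
    · intro i j hi hj h
      exact congrArg Fin.val h
  have cardB : B.card = r := by
    have hBA : B = Finset.univ.filter (fun i : Fin (ℓ + r) => ¬ i.val < ℓ) := by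
      rw [hBdef]; congr 1; ext i; rw [not_lt]
    have := Finset.card_filter_add_card_filter_not
      (s := (Finset.univ : Finset (Fin (ℓ + r)))) (p := fun i => i.val < ℓ)
    rw [card_univ, Fintype.card_fin, ← hAdef, ← hBA] at this
    omega
  -- filter identities
  have hfL : L.leaves.filter (fun i => i.val < ℓ) = A ∩ L.leaves := by
    ext x; rw [hAdef]; simp [and_comm]
  have hfR : R.leaves.filter (fun i => i.val < ℓ) = A ∩ R.leaves := by
    ext x; rw [hAdef]; simp [and_comm]
  have hgL : L.leaves.filter (fun i => ℓ ≤ i.val) = B ∩ L.leaves := by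
    ext x; rw [hBdef]; simp [and_comm]
  have hgR : R.leaves.filter (fun i => ℓ ≤ i.val) = B ∩ R.leaves := by
    ext x; rw [hBdef]; simp [and_comm]
  have hdA : Disjoint (A ∩ L.leaves) (A ∩ R.leaves) :=
    hd.mono inter_subset_right inter_subset_right
  have hdB : Disjoint (B ∩ L.leaves) (B ∩ R.leaves) :=
    hd.mono inter_subset_right inter_subset_right
  have hAsplit : (A ∩ L.leaves) ∪ (A ∩ R.leaves) = A := by
    rw [← inter_union_distrib_left, huniv, inter_univ]
  have hBsplit : (B ∩ L.leaves) ∪ (B ∩ R.leaves) = B := by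
    rw [← inter_union_distrib_left, huniv, inter_univ]
  have ha : (A ∩ L.leaves).card + (A ∩ R.leaves).card = ℓ := by
    rw [← card_union_of_disjoint hdA, hAsplit, cardA]
  have hb : (B ∩ L.leaves).card + (B ∩ R.leaves).card = r := by
    rw [← card_union_of_disjoint hdB, hBsplit, cardB]
  have hcardU : (L.leaves ∪ R.leaves).card = ℓ + r := by
    rw [huniv, card_univ, Fintype.card_fin]
  -- offDiag decompositions at the root
  have hOA := HTree.node_offDiag_sum L R hd (A ∩ L.leaves) (A ∩ R.leaves)
    inter_subset_right inter_subset_right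
  rw [hAsplit, hcardU] at hOA
  have hOB := HTree.node_offDiag_sum L R hd (B ∩ L.leaves) (B ∩ R.leaves)
    inter_subset_right inter_subset_right
  rw [hBsplit, hcardU] at hOB
  -- key lemma for the four subtree/clique combinations
  have kLA := HTree.key L hnd'.1 A
  have kRA := HTree.key R hnd'.2.1 A
  have kLB := HTree.key L hnd'.1 B
  have kRB := HTree.key R hnd'.2.1 B
  -- symmetry: offDiag sums are twice the ordered-pair sums
  have symA := HTree.offDiag_eq_two_mul A (fun i j => (HTree.node L R).lcaSize i j)
    (fun i j => HTree.lcaSize_comm _ i j)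
  have symB := HTree.offDiag_eq_two_mul B (fun i j => (HTree.node L R).lcaSize i j)
    (fun i j => HTree.lcaSize_comm _ i j)
  rw [symA] at hOA
  rw [symB] at hOB
  -- rewrite pairCost as a sum of two natural number sums
  have hPC : (HTree.node L R).pairCost (fun i j =>
        if i ≠ j ∧ ((i.val < ℓ ∧ j.val < ℓ) ∨ (ℓ ≤ i.val ∧ ℓ ≤ j.val)) then 1 else 0)
      = ((∑ p ∈ A.offDiag.filter (fun p => p.1 < p.2), (HTree.node L R).lcaSize p.1 p.2 : ℕ) : ℝ)
        + ((∑ p ∈ B.offDiag.filter (fun p => p.1 < p.2), (HTree.node L R).lcaSize p.1 p.2 : ℕ) : ℝ) := by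
    rw [HTree.pairCost]
    have hsummand : ∀ p ∈ Finset.univ.filter (fun p : Fin (ℓ + r) × Fin (ℓ + r) => p.1 < p.2),
        (if p.1 ≠ p.2 ∧ ((p.1.val < ℓ ∧ p.2.val < ℓ) ∨ (ℓ ≤ p.1.val ∧ ℓ ≤ p.2.val)) then (1:ℝ) else 0)
            * ((HTree.node L R).lcaSize p.1 p.2 : ℝ)
          = (if p.1.val < ℓ ∧ p.2.val < ℓ then ((HTree.node L R).lcaSize p.1 p.2 : ℝ) else 0)
            + (if ℓ ≤ p.1.val ∧ ℓ ≤ p.2.val then ((HTree.node L R).lcaSize p.1 p.2 : ℝ) else 0) := by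
      intro p hp
      rw [mem_filter] at hp
      have hne : p.1 ≠ p.2 := ne_of_lt hp.2
      by_cases hA1 : p.1.val < ℓ ∧ p.2.val < ℓ
      · have hB1 : ¬(ℓ ≤ p.1.val ∧ ℓ ≤ p.2.val) := by omega
        rw [if_pos ⟨hne, Or.inl hA1⟩, if_pos hA1, if_neg hB1, one_mul, add_zero]
      · by_cases hB1 : ℓ ≤ p.1.val ∧ ℓ ≤ p.2.val
        · rw [if_pos ⟨hne, Or.inr hB1⟩, if_pos hB1, if_neg hA1, one_mul, zero_add]
        · rw [if_neg (fun h => h.2.elim hA1 hB1), if_neg hA1, if_neg hB1, zero_mul, add_zero]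
    rw [sum_congr rfl hsummand, sum_add_distrib, ← sum_filter, ← sum_filter]
    have hsetA : (Finset.univ.filter (fun p : Fin (ℓ + r) × Fin (ℓ + r) => p.1 < p.2)).filter
          (fun p => p.1.val < ℓ ∧ p.2.val < ℓ) = A.offDiag.filter (fun p => p.1 < p.2) := by
      ext p
      rw [hAdef]
      simp only [mem_filter, mem_offDiag, mem_univ, true_and, Fin.lt_def, ne_eq, Fin.ext_iff]
      omega
    have hsetB : (Finset.univ.filter (fun p : Fin (ℓ + r) × Fin (ℓ + r) => p.1 < p.2)).filter
          (fun p => ℓ ≤ p.1.val ∧ ℓ ≤ p.2.val) = B.offDiag.filter (fun p => p.1 < p.2) := by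
      ext p
      rw [hBdef]
      simp only [mem_filter, mem_offDiag, mem_univ, true_and, Fin.lt_def, ne_eq, Fin.ext_iff]
      omega
    rw [hsetA, hsetB, Nat.cast_sum, Nat.cast_sum]
  rw [hPC, hfL, hfR, hgL, hgR]
  -- final arithmetic
  beta_reduce at hOA hOB
  have hA6 := two_cliques_arith _ _ _ _ _ _ _ kLA kRA hOA ha rfl
  have hB6 := two_cliques_arith _ _ _ _ _ _ _ kLB kRB hOB hb (Nat.add_comm r ℓ)
  have hA6' := (Nat.cast_le (α := ℝ)).2 hA6
  have hB6' := (Nat.cast_le (α := ℝ)).2 hB6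
  push_cast at hA6' hB6' ⊢
  linarith
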